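/- Let α ∈ [0,1], let μ⃗ = (μ₁,μ₂,μ₃) ∈ M_α, and let Φ₁, Φ₂, Φ₃ be polynomials with Φ₁′ − Φ₂′ = Φ₃′. If D_{h_z}(μ⃗) = 0 for every z ∈ ℂ ∖ (supp μ₁ ∪ supp μ₂ ∪ supp μ₃), then D_q(μ⃗) = 0 for every polynomial q. -/

import Mathlib

open MeasureTheory Complex Polynomial

noncomputable section

/-- The (topological) support of a measure on `ℂ`: the set of points all of whose open
neighborhoods have positive measure. -/
def msupport (μ : Measure ℂ) : Set ℂ :=
  {x : ℂ | ∀ U : Set ℂ, IsOpen U → x ∈ U → μ U ≠ 0}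

/-- The interaction matrix `A`. -/
def interA : Fin 3 → Fin 3 → ℝ :=
  ![![1, 1/2, 1/2], ![1/2, 1, -1/2], ![1/2, -1/2, 1]]

/-- The logarithmic energy `I(μ,ν) = ∬ log(1/|x-y|) dμ(x) dν(y)`. -/
def logEnergy (μ ν : Measure ℂ) : ℝ :=
  ∫ x, ∫ y, Real.log (1 / ‖x - y‖) ∂ν ∂μ

/-- The total energy functional `E(μ⃗)` with external fields `φ_j = Re Φ_j`. -/
def energyE (Φ : Fin 3 → Polynomial ℂ) (μ : Fin 3 → Measure ℂ) : ℝ :=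
  (∑ j, ∑ k, interA j k * logEnergy (μ j) (μ k)) +
    ∑ j, ∫ x, ((Φ j).eval x).re ∂(μ j)

/-- Membership in the class `M_α`: finite positive Borel measures with compact supports of zero
planar Lebesgue measure, finite energy (stated as integrability of all the energy integrands),
finite pairwise intersections of supports, and the prescribed total masses. -/
structure InClassM (α : ℝ) (Φ : Fin 3 → Polynomial ℂ) (μ : Fin 3 → Measure ℂ) : Prop where
  finite : ∀ j, IsFiniteMeasure (μ j)
  compactSupp : ∀ j, IsCompact (msupport (μ j))
  lebesgueNull : ∀ j, volume (msupport (μ j)) = 0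
  energyInt : ∀ j k, Integrable (fun p : ℂ × ℂ => Real.log (1 / ‖p.1 - p.2‖)) ((μ j).prod (μ k))
  fieldInt : ∀ j, Integrable (fun x => ((Φ j).eval x).re) (μ j)
  interFinite : Set.Finite ((msupport (μ 0) ∩ msupport (μ 1)) ∪
      (msupport (μ 0) ∩ msupport (μ 2)) ∪ (msupport (μ 1) ∩ msupport (μ 2)))
  mass01 : (μ 0 Set.univ).toReal + (μ 1 Set.univ).toReal = 1
  mass02 : (μ 0 Set.univ).toReal + (μ 2 Set.univ).toReal = α
  mass12 : (μ 1 Set.univ).toReal - (μ 2 Set.univ).toReal = 1 - α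

/-- The quantity `D_h(μ⃗)`. -/
def Dvar (Φ : Fin 3 → Polynomial ℂ) (μ : Fin 3 → Measure ℂ) (h : ℂ → ℂ) : ℂ :=
  -(∑ j, ∑ k, (interA j k : ℂ) * ∫ x, ∫ y, (h x - h y) / (x - y) ∂(μ k) ∂(μ j)) +
    ∑ j, ∫ x, (Polynomial.derivative (Φ j)).eval x * h x ∂(μ j)

/-- The pushforward `μ^t` of `μ` under the variation `z ↦ z + t h(z)`. -/
def pushMeas (h : ℂ → ℂ) (t : ℝ) (μ : Measure ℂ) : Measure ℂ :=
  Measure.map (fun z => z + (t : ℂ) * h z) μ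

/-- `μ⃗` is an `α`-critical measure: for every `h ∈ C²(ℂ)`,
`(E(μ⃗^t) - E(μ⃗))/t → 0` as `t → 0`. -/
def IsCriticalMeasure (Φ : Fin 3 → Polynomial ℂ) (μ : Fin 3 → Measure ℂ) : Prop :=
  ∀ h : ℂ → ℂ, ContDiff ℝ 2 h →
    Filter.Tendsto
      (fun t : ℝ => (energyE Φ (fun j => pushMeas h t (μ j)) - energyE Φ μ) / t)
      (nhdsWithin 0 {(0 : ℝ)}ᶜ) (nhds 0)

/-- The Cauchy transform `C^μ(z) = ∫ dμ(x)/(x - z)`. -/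
def cauchyT (μ : Measure ℂ) (z : ℂ) : ℂ := ∫ x, (x - z)⁻¹ ∂μ

/-- The functions `ξ₁, ξ₂, ξ₃` (0-indexed). -/
def xiF (Φ : Fin 3 → Polynomial ℂ) (μ : Fin 3 → Measure ℂ) : Fin 3 → ℂ → ℂ :=
  ![fun z => ((Polynomial.derivative (Φ 0)).eval z + (Polynomial.derivative (Φ 1)).eval z) / 3
      + cauchyT (μ 0) z + cauchyT (μ 1) z,
    fun z => -((Polynomial.derivative (Φ 0)).eval z + (Polynomial.derivative (Φ 2)).eval z) / 3
      - cauchyT (μ 0) z - cauchyT (μ 2) z,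
    fun z => -(Polynomial.derivative (Φ 1)).eval z / 3 + (Polynomial.derivative (Φ 2)).eval z / 3
      - cauchyT (μ 1) z + cauchyT (μ 2) z]

/-- The function `R(z)`. -/
def Rpol (Φ : Fin 3 → Polynomial ℂ) (μ : Fin 3 → Measure ℂ) (z : ℂ) : ℂ :=
  (1/9) * ∑ j, ∑ k, (interA j k : ℂ) * (Polynomial.derivative (Φ j)).eval z *
      (Polynomial.derivative (Φ k)).eval z
  - ∑ j, ∫ x, ((Polynomial.derivative (Φ j)).eval x - (Polynomial.derivative (Φ j)).eval z)
      / (x - z) ∂(μ j)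

section AuxLemmas

lemma msupport_compl_null (μ : Measure ℂ) : μ (msupport μ)ᶜ = 0 := by
  apply measure_null_of_locally_null
  intro x hx
  simp only [msupport, Set.mem_compl_iff, Set.mem_setOf_eq, not_forall] at hx
  obtain ⟨U, hU, hxU, hU0⟩ := hx
  refine ⟨U, ?_, by simpa using hU0⟩
  exact Filter.mem_of_superset (nhdsWithin_le_nhds (hU.mem_nhds hxU)) (by tauto)

lemma ae_mem_msupport (μ : Measure ℂ) : ∀ᵐ x ∂μ, x ∈ msupport μ :=
  (ae_iff.2 (by exact msupport_compl_null μ))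

def Sgeom (m : ℕ) (x y : ℂ) : ℂ := ∑ i ∈ Finset.range m, x^i * y^(m-1-i)

lemma Sgeom_mul (m : ℕ) (x y : ℂ) : Sgeom m x y * (x - y) = x^m - y^m :=
  geom_sum₂_mul x y m

lemma Sgeom_bound {R : ℝ} (hR : 1 ≤ R) (m : ℕ) {x y : ℂ} (hx : ‖x‖ ≤ R) (hy : ‖y‖ ≤ R) :
    ‖Sgeom m x y‖ ≤ m * R^m := by
  have h0 : (0:ℝ) ≤ R := le_trans zero_le_one hR
  calc ‖Sgeom m x y‖ ≤ ∑ i ∈ Finset.range m, ‖x^i * y^(m-1-i)‖ := norm_sum_le _ _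
    _ ≤ ∑ i ∈ Finset.range m, R^m := by
        apply Finset.sum_le_sum
        intro i hi
        have him := Finset.mem_range.mp hi
        rw [norm_mul, norm_pow, norm_pow]
        have h1 : ‖x‖^i * ‖y‖^(m-1-i) ≤ R^i * R^(m-1-i) := by
          apply mul_le_mul (pow_le_pow_left₀ (norm_nonneg x) hx i)
            (pow_le_pow_left₀ (norm_nonneg y) hy _) (by positivity) (by positivity)
        refine h1.trans ?_
        rw [← pow_add]
        exact pow_le_pow_right₀ hR (by omega)
    _ = m * R^m := by simp [Finset.sum_const, mul_comm]

lemma kern_P_eq (m : ℕ) (z x y : ℂ) (hxy : x ≠ y) (hxz : x ≠ z) (hyz : y ≠ z) :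
    (x^(m+1) * (x - z)⁻¹ - y^(m+1) * (y - z)⁻¹) / (x - y)
      = (x * y * Sgeom m x y - z * Sgeom (m+1) x y) * ((x - z) * (y - z))⁻¹ := by
  have h1 : x - y ≠ 0 := sub_ne_zero.2 hxy
  have h2 : x - z ≠ 0 := sub_ne_zero.2 hxz
  have h3 : y - z ≠ 0 := sub_ne_zero.2 hyz
  have g1 := Sgeom_mul m x y
  have g2 := Sgeom_mul (m+1) x y
  have key : x^(m+1) * (y-z) - y^(m+1) * (x-z)
      = (x - y) * (x * y * Sgeom m x y - z * Sgeom (m+1) x y) := by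
    linear_combination (-(x*y)) * g1 + z * g2
  have e1 : x^(m+1) * (x - z)⁻¹ - y^(m+1) * (y - z)⁻¹
      = (x^(m+1) * (y-z) - y^(m+1) * (x-z)) * ((x-z)*(y-z))⁻¹ := by
    field_simp
  rw [e1, key]
  have : (x - y) * (x * y * Sgeom m x y - z * Sgeom (m+1) x y) * ((x-z)*(y-z))⁻¹
      = (x * y * Sgeom m x y - z * Sgeom (m+1) x y) * ((x-z)*(y-z))⁻¹ * (x - y) := by ring
  rw [this, mul_div_cancel_right₀ _ h1]

lemma kern_P0_eq (z x y : ℂ) (hxy : x ≠ y) (hxz : x ≠ z) (hyz : y ≠ z) :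
    ((x - z)⁻¹ - (y - z)⁻¹) / (x - y) = -((x - z) * (y - z))⁻¹ := by
  have h1 : x - y ≠ 0 := sub_ne_zero.2 hxy
  have h2 : x - z ≠ 0 := sub_ne_zero.2 hxz
  have h3 : y - z ≠ 0 := sub_ne_zero.2 hyz
  field_simp
  ring

/-- uniform bound for the kernel of `x ↦ x^m (x-z)⁻¹`. -/
lemma kern_P_bound {R : ℝ} (hR : 1 ≤ R) (m : ℕ) {z x y : ℂ}
    (hz : 2*R ≤ ‖z‖) (hx : ‖x‖ ≤ R) (hy : ‖y‖ ≤ R) :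
    ‖(x^m * (x - z)⁻¹ - y^m * (y - z)⁻¹) / (x - y)‖ ≤ 8*(m+1)*R^(m+2) / ‖z‖ := by
  have h0 : (0:ℝ) ≤ R := le_trans zero_le_one hR
  have hz1 : (1:ℝ) ≤ ‖z‖ := le_trans (by linarith) hz
  have hz0 : (0:ℝ) < ‖z‖ := lt_of_lt_of_le one_pos hz1
  have hCnn : (0:ℝ) ≤ 8*(m+1)*R^(m+2) / ‖z‖ := by positivity
  rcases eq_or_ne x y with rfl | hxy
  · simpa using hCnn
  have hxz : x ≠ z := fun h => by rw [h] at hx; linarith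
  have hyz : y ≠ z := fun h => by rw [h] at hy; linarith
  have hxzn : ‖z‖/2 ≤ ‖x - z‖ := by
    have h := norm_sub_norm_le z x
    rw [norm_sub_rev z x] at h
    linarith
  have hyzn : ‖z‖/2 ≤ ‖y - z‖ := by
    have h := norm_sub_norm_le z y
    rw [norm_sub_rev z y] at h
    linarith
  have hprod : ‖z‖^2/4 ≤ ‖(x - z) * (y - z)‖ := by
    rw [norm_mul]
    calc ‖z‖^2/4 = (‖z‖/2) * (‖z‖/2) := by ring
      _ ≤ ‖x - z‖ * ‖y - z‖ := mul_le_mul hxzn hyzn (by positivity) (norm_nonneg _)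
  have hinv : ‖(x-z)*(y-z)‖⁻¹ ≤ 4/‖z‖^2 := by
    have h := inv_anti₀ (show (0:ℝ) < ‖z‖^2/4 by positivity) hprod
    simpa [inv_div] using h
  rcases m with _ | m
  · simp only [pow_zero, one_mul]
    rw [kern_P0_eq z x y hxy hxz hyz, norm_neg, norm_inv]
    refine hinv.trans ?_
    rw [div_le_div_iff₀ (by positivity) hz0]
    have hzz : ‖z‖ ≤ ‖z‖^2 := by nlinarith
    have hRp : (1:ℝ) ≤ R^2 := one_le_pow₀ hR
    push_cast
    nlinarith [mul_le_mul_of_nonneg_right hRp (sq_nonneg ‖z‖)]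
  · rw [kern_P_eq m z x y hxy hxz hyz, norm_mul, norm_inv]
    have hnum : ‖x * y * Sgeom m x y - z * Sgeom (m+1) x y‖
        ≤ R^2 * (m * R^m) + ‖z‖ * ((m+1) * R^(m+1)) := by
      refine (norm_sub_le _ _).trans ?_
      gcongr
      · rw [norm_mul, norm_mul]
        have h1 : ‖x‖ * ‖y‖ ≤ R^2 := by nlinarith [norm_nonneg x, norm_nonneg y]
        exact mul_le_mul h1 (by exact_mod_cast Sgeom_bound hR m hx hy) (norm_nonneg _) (by positivity)
      · rw [norm_mul]
        exact mul_le_mul_of_nonneg_left (by exact_mod_cast Sgeom_bound hR (m+1) hx hy) (norm_nonneg z)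
    calc ‖x * y * Sgeom m x y - z * Sgeom (m+1) x y‖ * ‖(x-z)*(y-z)‖⁻¹
        ≤ (R^2 * ((m:ℝ) * R^m) + ‖z‖ * (((m:ℝ)+1) * R^(m+1))) * (4/‖z‖^2) := by
          apply mul_le_mul hnum hinv (by positivity) ?_
          · positivity
      _ ≤ 8*((m:ℝ)+1+1)*R^(m+1+2) / ‖z‖ := by
          have e1 : (R^2 * ((m:ℝ) * R^m) + ‖z‖ * (((m:ℝ)+1) * R^(m+1))) * (4/‖z‖^2)
              = ((m:ℝ) * R^(m+2) + ‖z‖ * (((m:ℝ)+1) * R^(m+1))) * 4 / ‖z‖^2 := by ring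
          rw [e1, div_le_div_iff₀ (by positivity) hz0]
          have p1 : R^(m+2) ≤ R^(m+3) := pow_le_pow_right₀ hR (by omega)
          have p2 : R^(m+1) ≤ R^(m+3) := pow_le_pow_right₀ hR (by omega)
          have p3 : (0:ℝ) < R^(m+3) := by positivity
          have hzz : ‖z‖ ≤ ‖z‖^2 := by nlinarith
          have h4 : R^(m+2) * ‖z‖ ≤ R^(m+3) * ‖z‖^2 :=
            mul_le_mul p1 hzz hz0.le p3.le
          have h5 : R^(m+1) * ‖z‖^2 ≤ R^(m+3) * ‖z‖^2 :=
            mul_le_mul_of_nonneg_right p2 (sq_nonneg _)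
          have hm : (0:ℝ) ≤ (m:ℝ) := Nat.cast_nonneg m
          have h6 : (m:ℝ) * (R^(m+2) * ‖z‖) ≤ (m:ℝ) * (R^(m+3) * ‖z‖^2) :=
            mul_le_mul_of_nonneg_left h4 hm
          have h7 : ((m:ℝ)+1) * (R^(m+1) * ‖z‖^2) ≤ ((m:ℝ)+1) * (R^(m+3) * ‖z‖^2) :=
            mul_le_mul_of_nonneg_left h5 (by linarith)
          have h8 : (0:ℝ) ≤ R^(m+3) * ‖z‖^2 := by positivity
          have e2 : (m:ℝ)+1+2 = (m:ℝ)+3 := by ring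
          show ((m:ℝ) * R^(m+2) + ‖z‖ * (((m:ℝ)+1) * R^(m+1))) * 4 * ‖z‖
              ≤ 8*((m:ℝ)+1+1)*R^(m+1+2) * ‖z‖^2
          have e3 : (m:ℕ)+1+2 = m+3 := by omega
          rw [e3]
          nlinarith [h6, h7, h8]
      _ = 8*(((m:ℕ)+1:ℕ)+1)*R^((m:ℕ)+1+2) / ‖z‖ := by push_cast; ring

lemma kern_pow_bound {R : ℝ} (hR : 1 ≤ R) (m : ℕ) {x y : ℂ}
    (hx : ‖x‖ ≤ R) (hy : ‖y‖ ≤ R) :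
    ‖(x^m - y^m) / (x - y)‖ ≤ m * R^m := by
  have h0 : (0:ℝ) ≤ R := le_trans zero_le_one hR
  rcases eq_or_ne x y with rfl | hxy
  · simp; positivity
  · have h1 : x - y ≠ 0 := sub_ne_zero.2 hxy
    have he : (x^m - y^m) / (x - y) = Sgeom m x y := by
      rw [← Sgeom_mul m x y, mul_div_cancel_right₀ _ h1]
    rw [he]
    exact Sgeom_bound hR m hx hy

lemma ae_prod_of_ae {μ ν : Measure ℂ} [SFinite μ] [SFinite ν] {p q : ℂ → Prop}
    (hp : ∀ᵐ x ∂μ, p x) (hq : ∀ᵐ y ∂ν, q y) :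
    ∀ᵐ z ∂(μ.prod ν), p z.1 ∧ q z.2 := by
  rw [MeasureTheory.ae_iff]
  have hsub : {z : ℂ × ℂ | ¬(p z.1 ∧ q z.2)} ⊆
      (Set.prod {x | ¬ p x} Set.univ) ∪ (Set.prod Set.univ {y | ¬ q y}) := by
    intro z hz
    simp only [Set.mem_setOf_eq, not_and_or] at hz
    rcases hz with h | h
    · exact Or.inl ⟨h, trivial⟩
    · exact Or.inr ⟨trivial, h⟩
  refine measure_mono_null hsub (measure_union_null ?_ ?_)
  · show (μ.prod ν) ({x | ¬ p x} ×ˢ Set.univ) = 0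
    rw [Measure.prod_prod, ae_iff.1 hp, zero_mul]
  · show (μ.prod ν) (Set.univ ×ˢ {y | ¬ q y}) = 0
    rw [Measure.prod_prod, ae_iff.1 hq, mul_zero]

lemma meas_kern {h : ℂ → ℂ} (hm : Measurable h) :
    Measurable (fun p : ℂ × ℂ => (h p.1 - h p.2) / (p.1 - p.2)) :=
  ((hm.comp measurable_fst).sub (hm.comp measurable_snd)).div
    (measurable_fst.sub measurable_snd)

lemma meas_P (m : ℕ) (z : ℂ) : Measurable (fun x : ℂ => x^m * (x - z)⁻¹) :=
  (measurable_id.pow_const m).mul ((measurable_id.sub_const z).inv)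

/-- integrability of a kernel bounded a.e. -/
lemma integrable_kern_of_bound {μ ν : Measure ℂ} [IsFiniteMeasure μ] [IsFiniteMeasure ν]
    {h : ℂ → ℂ} (hm : Measurable h) {C : ℝ}
    (hb : ∀ᵐ z ∂(μ.prod ν), ‖(h z.1 - h z.2) / (z.1 - z.2)‖ ≤ C) :
    Integrable (fun p : ℂ × ℂ => (h p.1 - h p.2) / (p.1 - p.2)) (μ.prod ν) :=
  ⟨(meas_kern hm).aestronglyMeasurable, HasFiniteIntegral.of_bounded hb⟩


lemma iter_eq_prod {μ ν : Measure ℂ} [SFinite μ] [SFinite ν] {h : ℂ → ℂ}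
    (hint : Integrable (fun p : ℂ × ℂ => (h p.1 - h p.2) / (p.1 - p.2)) (μ.prod ν)) :
    ∫ x, ∫ y, (h x - h y) / (x - y) ∂ν ∂μ
      = ∫ z, (h z.1 - h z.2) / (z.1 - z.2) ∂(μ.prod ν) :=
  (MeasureTheory.integral_integral (f := fun x y => (h x - h y) / (x - y)) hint)


lemma Dvar_linear (Φ : Fin 3 → Polynomial ℂ) (μ : Fin 3 → Measure ℂ)
    (hfin : ∀ j, IsFiniteMeasure (μ j))
    (h₁ h₂ h₃ : ℂ → ℂ) (c : ℂ)
    (hae : ∀ j, ∀ᵐ x ∂(μ j), h₁ x = c * h₂ x + h₃ x)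
    (hK2 : ∀ j k, Integrable (fun p : ℂ × ℂ => (h₂ p.1 - h₂ p.2) / (p.1 - p.2)) ((μ j).prod (μ k)))
    (hK3 : ∀ j k, Integrable (fun p : ℂ × ℂ => (h₃ p.1 - h₃ p.2) / (p.1 - p.2)) ((μ j).prod (μ k)))
    (hJ2 : ∀ j, Integrable (fun x => (Polynomial.derivative (Φ j)).eval x * h₂ x) (μ j))
    (hJ3 : ∀ j, Integrable (fun x => (Polynomial.derivative (Φ j)).eval x * h₃ x) (μ j)) :
    Dvar Φ μ h₁ = c * Dvar Φ μ h₂ + Dvar Φ μ h₃ := by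
  have hKae : ∀ j k, (fun p : ℂ × ℂ => (h₁ p.1 - h₁ p.2) / (p.1 - p.2))
      =ᵐ[(μ j).prod (μ k)]
      (fun p : ℂ × ℂ => c * ((h₂ p.1 - h₂ p.2) / (p.1 - p.2))
        + (h₃ p.1 - h₃ p.2) / (p.1 - p.2)) := by
    intro j k
    haveI := hfin j; haveI := hfin k
    filter_upwards [ae_prod_of_ae (hae j) (hae k)] with z hz
    obtain ⟨e1, e2⟩ := hz
    rw [e1, e2, show c * h₂ z.1 + h₃ z.1 - (c * h₂ z.2 + h₃ z.2)
        = c * (h₂ z.1 - h₂ z.2) + (h₃ z.1 - h₃ z.2) by ring, add_div, mul_div_assoc]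
  have hIeq : ∀ j k, (∫ x, ∫ y, (h₁ x - h₁ y) / (x - y) ∂(μ k) ∂(μ j))
      = c * (∫ x, ∫ y, (h₂ x - h₂ y) / (x - y) ∂(μ k) ∂(μ j))
        + ∫ x, ∫ y, (h₃ x - h₃ y) / (x - y) ∂(μ k) ∂(μ j) := by
    intro j k
    haveI := hfin j; haveI := hfin k
    have hK1 : Integrable (fun p : ℂ × ℂ => (h₁ p.1 - h₁ p.2) / (p.1 - p.2))
        ((μ j).prod (μ k)) :=
      (((hK2 j k).const_mul c).add (hK3 j k)).congr (hKae j k).symm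
    rw [iter_eq_prod hK1, iter_eq_prod (hK2 j k), iter_eq_prod (hK3 j k),
      integral_congr_ae (hKae j k),
      integral_add ((hK2 j k).const_mul c) (hK3 j k), integral_const_mul]
  have hJeq : ∀ j, (∫ x, (Polynomial.derivative (Φ j)).eval x * h₁ x ∂(μ j))
      = c * (∫ x, (Polynomial.derivative (Φ j)).eval x * h₂ x ∂(μ j))
        + ∫ x, (Polynomial.derivative (Φ j)).eval x * h₃ x ∂(μ j) := by
    intro j
    haveI := hfin j
    have ae' : (fun x => (Polynomial.derivative (Φ j)).eval x * h₁ x)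
        =ᵐ[μ j] (fun x => c * ((Polynomial.derivative (Φ j)).eval x * h₂ x)
          + (Polynomial.derivative (Φ j)).eval x * h₃ x) :=
      (hae j).mono fun x hx => by dsimp only; rw [hx]; ring
    rw [integral_congr_ae ae', integral_add ((hJ2 j).const_mul c) (hJ3 j), integral_const_mul]
  unfold Dvar
  simp only [hIeq, hJeq]
  have A : ∀ (I₂ I₃ : Fin 3 → Fin 3 → ℂ),
      (∑ j, ∑ k, (interA j k : ℂ) * (c * I₂ j k + I₃ j k))
        = c * (∑ j, ∑ k, (interA j k : ℂ) * I₂ j k) + ∑ j, ∑ k, (interA j k : ℂ) * I₃ j k := by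
    intro I₂ I₃
    rw [Finset.mul_sum, ← Finset.sum_add_distrib]
    refine Finset.sum_congr rfl fun j _ => ?_
    rw [Finset.mul_sum, ← Finset.sum_add_distrib]
    refine Finset.sum_congr rfl fun k _ => ?_
    ring
  rw [A (fun j k => ∫ x, ∫ y, (h₂ x - h₂ y) / (x - y) ∂(μ k) ∂(μ j))
      (fun j k => ∫ x, ∫ y, (h₃ x - h₃ y) / (x - y) ∂(μ k) ∂(μ j))]
  have B : (∑ j, (c * (∫ x, (Polynomial.derivative (Φ j)).eval x * h₂ x ∂(μ j))
        + ∫ x, (Polynomial.derivative (Φ j)).eval x * h₃ x ∂(μ j)))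
      = c * (∑ j, ∫ x, (Polynomial.derivative (Φ j)).eval x * h₂ x ∂(μ j))
        + ∑ j, ∫ x, (Polynomial.derivative (Φ j)).eval x * h₃ x ∂(μ j) := by
    rw [Finset.mul_sum, ← Finset.sum_add_distrib]
  rw [B]
  ring

lemma Dvar_finsum (Φ : Fin 3 → Polynomial ℂ) (μ : Fin 3 → Measure ℂ)
    (hfin : ∀ j, IsFiniteMeasure (μ j))
    {ι : Type} (s : Finset ι) (c : ι → ℂ) (g : ι → ℂ → ℂ) (h : ℂ → ℂ)
    (hh : ∀ x, h x = ∑ i ∈ s, c i * g i x)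
    (hK : ∀ i ∈ s, ∀ j k, Integrable
      (fun p : ℂ × ℂ => (g i p.1 - g i p.2) / (p.1 - p.2)) ((μ j).prod (μ k)))
    (hJ : ∀ i ∈ s, ∀ j, Integrable
      (fun x => (Polynomial.derivative (Φ j)).eval x * g i x) (μ j)) :
    Dvar Φ μ h = ∑ i ∈ s, c i * Dvar Φ μ (g i) := by
  have kern_eq : ∀ p : ℂ × ℂ, (h p.1 - h p.2) / (p.1 - p.2)
      = ∑ i ∈ s, c i * ((g i p.1 - g i p.2) / (p.1 - p.2)) := by
    intro p
    rw [hh p.1, hh p.2, ← Finset.sum_sub_distrib, Finset.sum_div]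
    refine Finset.sum_congr rfl fun i _ => ?_
    rw [← mul_sub, mul_div_assoc]
  have hIeq : ∀ j k, (∫ x, ∫ y, (h x - h y) / (x - y) ∂(μ k) ∂(μ j))
      = ∑ i ∈ s, c i * ∫ x, ∫ y, (g i x - g i y) / (x - y) ∂(μ k) ∂(μ j) := by
    intro j k
    haveI := hfin j; haveI := hfin k
    have hK1 : Integrable (fun p : ℂ × ℂ => (h p.1 - h p.2) / (p.1 - p.2))
        ((μ j).prod (μ k)) := by
      have : (fun p : ℂ × ℂ => (h p.1 - h p.2) / (p.1 - p.2))
          = fun p : ℂ × ℂ => ∑ i ∈ s, c i * ((g i p.1 - g i p.2) / (p.1 - p.2)) :=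
        funext kern_eq
      rw [this]
      exact integrable_finset_sum s fun i hi => (hK i hi j k).const_mul (c i)
    rw [iter_eq_prod hK1]
    have e : (∫ z : ℂ × ℂ, (h z.1 - h z.2) / (z.1 - z.2) ∂((μ j).prod (μ k)))
        = ∫ z : ℂ × ℂ, ∑ i ∈ s, c i * ((g i z.1 - g i z.2) / (z.1 - z.2))
            ∂((μ j).prod (μ k)) := by
      congr 1
      exact funext kern_eq
    rw [e, integral_finset_sum s fun i hi => (hK i hi j k).const_mul (c i)]
    exact Finset.sum_congr rfl fun i hi => by
      rw [integral_const_mul, iter_eq_prod (hK i hi j k)]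
  have hJeq : ∀ j, (∫ x, (Polynomial.derivative (Φ j)).eval x * h x ∂(μ j))
      = ∑ i ∈ s, c i * ∫ x, (Polynomial.derivative (Φ j)).eval x * g i x ∂(μ j) := by
    intro j
    haveI := hfin j
    have e : (fun x => (Polynomial.derivative (Φ j)).eval x * h x)
        = fun x => ∑ i ∈ s, c i * ((Polynomial.derivative (Φ j)).eval x * g i x) := by
      funext x
      rw [hh x, Finset.mul_sum]
      exact Finset.sum_congr rfl fun i _ => by ring
    rw [e, integral_finset_sum s fun i hi => ((hJ i hi j).const_mul (c i))]
    exact Finset.sum_congr rfl fun i hi => integral_const_mul _ _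
  unfold Dvar
  simp only [hIeq, hJeq]
  have A : (∑ j, ∑ k, (interA j k : ℂ)
        * ∑ i ∈ s, c i * ∫ x, ∫ y, (g i x - g i y) / (x - y) ∂(μ k) ∂(μ j))
      = ∑ i ∈ s, c i * ∑ j, ∑ k, (interA j k : ℂ)
        * ∫ x, ∫ y, (g i x - g i y) / (x - y) ∂(μ k) ∂(μ j) := by
    simp only [Finset.mul_sum]
    calc (∑ j : Fin 3, ∑ k : Fin 3, ∑ i ∈ s, (interA j k : ℂ)
          * (c i * ∫ x, ∫ y, (g i x - g i y) / (x - y) ∂(μ k) ∂(μ j)))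
        = ∑ j : Fin 3, ∑ i ∈ s, ∑ k : Fin 3, (interA j k : ℂ)
          * (c i * ∫ x, ∫ y, (g i x - g i y) / (x - y) ∂(μ k) ∂(μ j)) :=
          Finset.sum_congr rfl fun j _ => Finset.sum_comm
      _ = ∑ i ∈ s, ∑ j : Fin 3, ∑ k : Fin 3, (interA j k : ℂ)
          * (c i * ∫ x, ∫ y, (g i x - g i y) / (x - y) ∂(μ k) ∂(μ j)) := Finset.sum_comm
      _ = ∑ i ∈ s, ∑ j : Fin 3, ∑ k : Fin 3, c i * ((interA j k : ℂ)
          * ∫ x, ∫ y, (g i x - g i y) / (x - y) ∂(μ k) ∂(μ j)) := by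
          refine Finset.sum_congr rfl fun i _ => Finset.sum_congr rfl fun j _ =>
            Finset.sum_congr rfl fun k _ => by ring
  have B : (∑ j, ∑ i ∈ s, c i * ∫ x, (Polynomial.derivative (Φ j)).eval x * g i x ∂(μ j))
      = ∑ i ∈ s, c i * ∑ j, ∫ x, (Polynomial.derivative (Φ j)).eval x * g i x ∂(μ j) := by
    simp only [Finset.mul_sum]
    exact Finset.sum_comm
  rw [A, B, ← Finset.sum_neg_distrib, ← Finset.sum_add_distrib]
  exact Finset.sum_congr rfl fun i _ => by ring

end AuxLemmas

/-- Let `μ⃗ ∈ M_α` with external fields satisfying `Φ₁′ − Φ₂′ = Φ₃′`.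
If `D_{h_z}(μ⃗) = 0` for every `z` outside `supp μ₁ ∪ supp μ₂ ∪ supp μ₃`, then
`D_q(μ⃗) = 0` for every polynomial `q`. -/
theorem Dvar_poly_eq_zero (α : ℝ) (hα : α ∈ Set.Icc (0 : ℝ) 1)
    (Φ : Fin 3 → Polynomial ℂ)
    (hΦ : Polynomial.derivative (Φ 0) - Polynomial.derivative (Φ 1) =
      Polynomial.derivative (Φ 2))
    (μ : Fin 3 → Measure ℂ) (hμ : InClassM α Φ μ)
    (hz : ∀ z : ℂ, z ∉ msupport (μ 0) ∪ msupport (μ 1) ∪ msupport (μ 2) →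
      Dvar Φ μ (fun x => (x - z)⁻¹) = 0) :
    ∀ q : Polynomial ℂ, Dvar Φ μ (fun x => q.eval x) = 0 := by
  classical
  -- a radius bounding all supports
  obtain ⟨R, hR1, hKR⟩ : ∃ R : ℝ, 1 ≤ R ∧ ∀ j, msupport (μ j) ⊆ Metric.closedBall 0 R := by
    have hb : ∀ j : Fin 3, ∃ r : ℝ, msupport (μ j) ⊆ Metric.closedBall 0 r := fun j =>
      ((hμ.compactSupp j).isBounded).subset_closedBall 0
    obtain ⟨r0, h0⟩ := hb 0; obtain ⟨r1, h1⟩ := hb 1; obtain ⟨r2, h2⟩ := hb 2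
    refine ⟨max 1 (max r0 (max r1 r2)), le_max_left _ _, ?_⟩
    intro j
    fin_cases j
    · exact h0.trans (Metric.closedBall_subset_closedBall
        ((le_max_left r0 _).trans (le_max_right 1 _)))
    · exact h1.trans (Metric.closedBall_subset_closedBall
        (((le_max_left r1 _).trans (le_max_right r0 _)).trans (le_max_right 1 _)))
    · exact h2.trans (Metric.closedBall_subset_closedBall
        (((le_max_right r1 _).trans (le_max_right r0 _)).trans (le_max_right 1 _)))
  have hR0 : (0:ℝ) < R := lt_of_lt_of_le one_pos hR1
  have haeR : ∀ j, ∀ᵐ x ∂(μ j), ‖x‖ ≤ R := by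
    intro j
    filter_upwards [ae_mem_msupport (μ j)] with x hx
    exact mem_closedBall_zero_iff.mp (hKR j hx)
  -- measurability of integrands
  have measP : ∀ (m : ℕ) (z : ℂ), Measurable (fun x : ℂ => x^m * (x - z)⁻¹) := fun m z =>
    (measurable_id.pow_const m).mul ((measurable_id.sub_const z).inv)
  have measPow : ∀ m : ℕ, Measurable (fun x : ℂ => x^m) := fun m => measurable_id.pow_const m
  have measKern : ∀ {h : ℂ → ℂ}, Measurable h →
      Measurable (fun p : ℂ × ℂ => (h p.1 - h p.2) / (p.1 - p.2)) := fun hm =>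
    ((hm.comp measurable_fst).sub (hm.comp measurable_snd)).div
      (measurable_fst.sub measurable_snd)
  -- integrability of power kernels
  have hKpow : ∀ (m : ℕ) (j k : Fin 3), Integrable
      (fun p : ℂ × ℂ => (p.1^m - p.2^m) / (p.1 - p.2)) ((μ j).prod (μ k)) := by
    intro m j k
    haveI := hμ.finite j; haveI := hμ.finite k
    refine ⟨((measKern (measPow m)).aestronglyMeasurable),
      HasFiniteIntegral.of_bounded (C := m * R^m) ?_⟩
    filter_upwards [ae_prod_of_ae (haeR j) (haeR k)] with p hp
    exact kern_pow_bound hR1 m hp.1 hp.2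
  -- integrability of Cauchy kernels
  have hKP : ∀ (m : ℕ) (j k : Fin 3) (z : ℂ), 2*R ≤ ‖z‖ → Integrable
      (fun p : ℂ × ℂ => (p.1^m * (p.1 - z)⁻¹ - p.2^m * (p.2 - z)⁻¹) / (p.1 - p.2))
      ((μ j).prod (μ k)) := by
    intro m j k z hzn
    haveI := hμ.finite j; haveI := hμ.finite k
    refine ⟨((measKern (measP m z)).aestronglyMeasurable),
      HasFiniteIntegral.of_bounded (C := 8*(m+1)*R^(m+2) / ‖z‖) ?_⟩
    filter_upwards [ae_prod_of_ae (haeR j) (haeR k)] with p hp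
    exact kern_P_bound hR1 m hzn hp.1 hp.2
  -- bound for the external fields
  have hM : ∀ j : Fin 3, ∃ M : ℝ, 0 ≤ M ∧ ∀ x : ℂ, ‖x‖ ≤ R →
      ‖(Polynomial.derivative (Φ j)).eval x‖ ≤ M := by
    intro j
    obtain ⟨M, hMb⟩ := (isCompact_closedBall (0:ℂ) R).exists_bound_of_continuousOn
      (Polynomial.continuous (Polynomial.derivative (Φ j))).continuousOn
    refine ⟨max M 0, le_max_right _ _, fun x hx => ?_⟩
    exact (hMb x (mem_closedBall_zero_iff.mpr hx)).trans (le_max_left _ _)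
  choose M hM0 hMb using hM
  have hJpow : ∀ (m : ℕ) (j : Fin 3), Integrable
      (fun x => (Polynomial.derivative (Φ j)).eval x * x^m) (μ j) := by
    intro m j
    haveI := hμ.finite j
    refine ⟨((Polynomial.continuous _).measurable.mul (measPow m)).aestronglyMeasurable,
      HasFiniteIntegral.of_bounded (C := M j * R^m) ?_⟩
    filter_upwards [haeR j] with x hx
    rw [norm_mul, norm_pow]
    exact mul_le_mul (hMb j x hx) (pow_le_pow_left₀ (norm_nonneg x) hx m)
      (by positivity) (hM0 j)
  have hJP : ∀ (m : ℕ) (j : Fin 3) (z : ℂ), 2*R ≤ ‖z‖ → Integrable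
      (fun x => (Polynomial.derivative (Φ j)).eval x * (x^m * (x - z)⁻¹)) (μ j) := by
    intro m j z hzn
    haveI := hμ.finite j
    refine ⟨((Polynomial.continuous _).measurable.mul (measP m z)).aestronglyMeasurable,
      HasFiniteIntegral.of_bounded (C := M j * R^m) ?_⟩
    filter_upwards [haeR j] with x hx
    have hxz : (1:ℝ) ≤ ‖x - z‖ := by
      have h := norm_sub_norm_le z x
      rw [norm_sub_rev z x] at h
      linarith
    rw [norm_mul, norm_mul, norm_pow, norm_inv]
    have h1 : ‖x‖^m * ‖x - z‖⁻¹ ≤ R^m := by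
      have hinv : ‖x - z‖⁻¹ ≤ 1 := by
        rw [inv_le_one_iff₀]; right; exact hxz
      calc ‖x‖^m * ‖x - z‖⁻¹ ≤ R^m * 1 := by
            apply mul_le_mul (pow_le_pow_left₀ (norm_nonneg x) hx m) hinv
              (by positivity) (by positivity)
        _ = R^m := mul_one _
    exact mul_le_mul (hMb j x hx) h1 (by positivity) (hM0 j)
  -- the recurrence
  have hrec : ∀ (m : ℕ) (z : ℂ), 2*R ≤ ‖z‖ →
      Dvar Φ μ (fun x => x^(m+1) * (x - z)⁻¹)
        = z * Dvar Φ μ (fun x => x^m * (x - z)⁻¹) + Dvar Φ μ (fun x => x^m) := by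
    intro m z hzn
    refine Dvar_linear Φ μ hμ.finite _ _ _ z ?_ (fun j k => hKP m j k z hzn) (hKpow m)
      (fun j => hJP m j z hzn) (hJpow m)
    intro j
    filter_upwards [haeR j] with x hx
    have hxz : x - z ≠ 0 := by
      intro h
      rw [sub_eq_zero] at h
      rw [h] at hx
      linarith
    field_simp
    ring
  -- the base case from the hypothesis
  have hbase : ∀ z : ℂ, 2*R ≤ ‖z‖ → Dvar Φ μ (fun x => x^0 * (x - z)⁻¹) = 0 := by
    intro z hzn
    have hzK : z ∉ msupport (μ 0) ∪ msupport (μ 1) ∪ msupport (μ 2) := by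
      intro hmem
      have h : z ∈ Metric.closedBall (0:ℂ) R := by
        rcases hmem with (h | h) | h
        exacts [hKR 0 h, hKR 1 h, hKR 2 h]
      rw [mem_closedBall_zero_iff] at h
      linarith
    have h0 := hz z hzK
    rw [show (fun x : ℂ => x^0 * (x - z)⁻¹) = (fun x : ℂ => (x - z)⁻¹) from
      funext fun x => by rw [pow_zero, one_mul]]
    exact h0
  -- B_n(z) = 0 given lower A's vanish
  have hBn : ∀ (n : ℕ), (∀ i < n, Dvar Φ μ (fun x => x^i) = 0) → ∀ z : ℂ, 2*R ≤ ‖z‖ →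
      Dvar Φ μ (fun x => x^n * (x - z)⁻¹) = 0 := by
    intro n
    induction n with
    | zero => intro _ z hzn; exact hbase z hzn
    | succ n ih =>
      intro hAi z hzn
      rw [hrec n z hzn, ih (fun i hi => hAi i (Nat.lt_succ_of_lt hi)) z hzn,
        mul_zero, zero_add]
      exact hAi n (Nat.lt_succ_self n)
  have hnorm_t : ∀ t : ℝ, 0 ≤ t → ‖((t:ℝ):ℂ)‖ = t := fun t h => by
    rw [Complex.norm_real, Real.norm_eq_abs, _root_.abs_of_nonneg h]
  -- pointwise limits
  have hterm : ∀ (n : ℕ) (x : ℂ), Filter.Tendsto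
      (fun t : ℝ => x^(n+1) * (x - (t:ℂ))⁻¹) Filter.atTop (nhds 0) := by
    intro n x
    rw [show (0:ℂ) = x^(n+1) * 0 by ring]
    apply Filter.Tendsto.const_mul
    have hb : ∀ᶠ t : ℝ in Filter.atTop, ‖(x - (t:ℂ))⁻¹‖ ≤ (t - ‖x‖)⁻¹ := by
      filter_upwards [Filter.eventually_ge_atTop (‖x‖ + 1)] with t ht
      rw [norm_inv]
      apply inv_anti₀ (show (0:ℝ) < t - ‖x‖ by linarith)
      have h := norm_sub_norm_le ((t:ℝ):ℂ) x
      rw [norm_sub_rev] at h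
      rw [hnorm_t t (by linarith [norm_nonneg x])] at h
      linarith
    have hg : Filter.Tendsto (fun t : ℝ => (t - ‖x‖)⁻¹) Filter.atTop (nhds 0) :=
      tendsto_inv_atTop_zero.comp (Filter.tendsto_atTop_add_const_right _ _ Filter.tendsto_id)
    exact squeeze_zero_norm' hb hg
  -- limits: every Dvar(x^(n+1)/(x-t)) → 0 as t → ∞ along ℝ
  have hlim : ∀ n : ℕ, Filter.Tendsto
      (fun t : ℝ => Dvar Φ μ (fun x => x^(n+1) * (x - (t:ℂ))⁻¹))
      Filter.atTop (nhds 0) := by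
    intro n
    have hnormt : ∀ᶠ t : ℝ in Filter.atTop, 2*R ≤ ‖((t:ℝ):ℂ)‖ := by
      filter_upwards [Filter.eventually_ge_atTop (2*R)] with t ht
      rw [hnorm_t t (by linarith)]
      exact ht
    have hIlim : ∀ j k : Fin 3, Filter.Tendsto (fun t : ℝ =>
        ∫ x, ∫ y, (x^(n+1) * (x - (t:ℂ))⁻¹ - y^(n+1) * (y - (t:ℂ))⁻¹) / (x - y)
          ∂(μ k) ∂(μ j)) Filter.atTop (nhds 0) := by
      intro j k
      haveI := hμ.finite j; haveI := hμ.finite k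
      have hprod : Filter.Tendsto (fun t : ℝ =>
          ∫ p : ℂ × ℂ, (p.1^(n+1) * (p.1 - (t:ℂ))⁻¹ - p.2^(n+1) * (p.2 - (t:ℂ))⁻¹)
            / (p.1 - p.2) ∂((μ j).prod (μ k))) Filter.atTop (nhds 0) := by
        have h0 : (0:ℂ) = ∫ _p : ℂ × ℂ, (0:ℂ) ∂((μ j).prod (μ k)) := by simp
        rw [h0]
        apply tendsto_integral_filter_of_dominated_convergence
          (bound := fun _ => 8*(n+1+1)*R^(n+1+2))
        · exact Filter.Eventually.of_forall fun t =>
            (measKern (measP (n+1) ((t:ℝ):ℂ))).aestronglyMeasurable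
        · filter_upwards [hnormt] with t ht
          filter_upwards [ae_prod_of_ae (haeR j) (haeR k)] with p hp
          refine (kern_P_bound hR1 (n+1) ht hp.1 hp.2).trans ?_
          have h1 : (1:ℝ) ≤ ‖((t:ℝ):ℂ)‖ := le_trans (by linarith) ht
          rw [div_le_iff₀ (by linarith)]
          push_cast
          nlinarith [mul_le_mul_of_nonneg_left h1
            (show (0:ℝ) ≤ 8*((n:ℝ)+1+1)*R^(n+1+2) by positivity)]
        · exact integrable_const _
        · apply Filter.Eventually.of_forall
          intro p
          rcases eq_or_ne p.1 p.2 with he | hne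
          · rw [he]
            simpa using tendsto_const_nhds
          · have hd := ((hterm n p.1).sub (hterm n p.2)).div_const (p.1 - p.2)
            simpa using hd
      apply hprod.congr'
      filter_upwards [hnormt] with t ht
      exact (iter_eq_prod (h := fun x => x^(n+1) * (x - ((t:ℝ):ℂ))⁻¹)
        (hKP (n+1) j k ((t:ℝ):ℂ) ht)).symm
    have hJlim : ∀ j : Fin 3, Filter.Tendsto (fun t : ℝ =>
        ∫ x, (Polynomial.derivative (Φ j)).eval x * (x^(n+1) * (x - (t:ℂ))⁻¹) ∂(μ j))
        Filter.atTop (nhds 0) := by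
      intro j
      haveI := hμ.finite j
      have h0 : (0:ℂ) = ∫ _x : ℂ, (0:ℂ) ∂(μ j) := by simp
      rw [h0]
      apply tendsto_integral_filter_of_dominated_convergence
        (bound := fun _ => M j * R^(n+1))
      · exact Filter.Eventually.of_forall fun t =>
          ((Polynomial.continuous _).measurable.mul (measP (n+1) ((t:ℝ):ℂ))).aestronglyMeasurable
      · filter_upwards [hnormt] with t ht
        filter_upwards [haeR j] with x hx
        have hxz : (1:ℝ) ≤ ‖x - ((t:ℝ):ℂ)‖ := by
          have h := norm_sub_norm_le ((t:ℝ):ℂ) x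
          rw [norm_sub_rev] at h
          linarith
        rw [norm_mul, norm_mul, norm_pow, norm_inv]
        have hinv : ‖x - ((t:ℝ):ℂ)‖⁻¹ ≤ 1 := by
          rw [inv_le_one_iff₀]; right; exact hxz
        have h2 : ‖x‖^(n+1) * ‖x - ((t:ℝ):ℂ)‖⁻¹ ≤ R^(n+1) := by
          calc ‖x‖^(n+1) * ‖x - ((t:ℝ):ℂ)‖⁻¹ ≤ R^(n+1) * 1 :=
                mul_le_mul (pow_le_pow_left₀ (norm_nonneg x) hx (n+1)) hinv
                  (by positivity) (by positivity)
            _ = R^(n+1) := mul_one _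
        exact mul_le_mul (hMb j x hx) h2 (by positivity) (hM0 j)
      · exact integrable_const _
      · exact Filter.Eventually.of_forall fun x => by
          simpa using (hterm n x).const_mul ((Polynomial.derivative (Φ j)).eval x)
    -- combine
    have hsum1 : Filter.Tendsto (fun t : ℝ => ∑ j : Fin 3, ∑ k : Fin 3, (interA j k : ℂ) *
        ∫ x, ∫ y, (x^(n+1) * (x - (t:ℂ))⁻¹ - y^(n+1) * (y - (t:ℂ))⁻¹) / (x - y)
          ∂(μ k) ∂(μ j)) Filter.atTop (nhds 0) := by
      have h1 : Filter.Tendsto (fun t : ℝ => ∑ j : Fin 3, ∑ k : Fin 3, (interA j k : ℂ) *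
          ∫ x, ∫ y, (x^(n+1) * (x - (t:ℂ))⁻¹ - y^(n+1) * (y - (t:ℂ))⁻¹) / (x - y)
            ∂(μ k) ∂(μ j)) Filter.atTop (nhds (∑ _j : Fin 3, ∑ _k : Fin 3, (0:ℂ))) := by
        apply tendsto_finset_sum
        intro j _
        apply tendsto_finset_sum
        intro k _
        simpa using (hIlim j k).const_mul ((interA j k : ℂ))
      simpa using h1
    have hsum2 : Filter.Tendsto (fun t : ℝ => ∑ j : Fin 3,
        ∫ x, (Polynomial.derivative (Φ j)).eval x * (x^(n+1) * (x - (t:ℂ))⁻¹) ∂(μ j))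
        Filter.atTop (nhds 0) := by
      have h2 : Filter.Tendsto (fun t : ℝ => ∑ j : Fin 3,
          ∫ x, (Polynomial.derivative (Φ j)).eval x * (x^(n+1) * (x - (t:ℂ))⁻¹) ∂(μ j))
          Filter.atTop (nhds (∑ _j : Fin 3, (0:ℂ))) :=
        tendsto_finset_sum _ fun j _ => hJlim j
      simpa using h2
    have hfinal := hsum1.neg.add hsum2
    rw [show (-(0:ℂ) + 0 : ℂ) = 0 by ring] at hfinal
    apply hfinal.congr
    intro t
    show _ = Dvar Φ μ (fun x => x^(n+1) * (x - ((t:ℝ):ℂ))⁻¹)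
    unfold Dvar
    rfl
  -- all moments vanish
  have hAz : ∀ n : ℕ, Dvar Φ μ (fun x => x^n) = 0 := by
    intro n
    induction n using Nat.strong_induction_on with
    | _ n IH =>
      have key : ∀ᶠ t : ℝ in Filter.atTop,
          Dvar Φ μ (fun x => x^(n+1) * (x - (t:ℂ))⁻¹) = Dvar Φ μ (fun x => x^n) := by
        filter_upwards [Filter.eventually_ge_atTop (2*R)] with t ht
        have hzn : 2*R ≤ ‖((t:ℝ):ℂ)‖ := by
          rw [hnorm_t t (by linarith)]
          exact ht
        rw [hrec n (t:ℂ) hzn, hBn n (fun i hi => IH i hi) (t:ℂ) hzn, mul_zero, zero_add]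
      have : Filter.Tendsto (fun _ : ℝ => Dvar Φ μ (fun x => x^n)) Filter.atTop (nhds 0) :=
        Filter.Tendsto.congr' key (hlim n)
      exact tendsto_nhds_unique tendsto_const_nhds this
  -- conclude for an arbitrary polynomial
  intro q
  have hq : ∀ x : ℂ, q.eval x = ∑ i ∈ Finset.range (q.natDegree + 1), q.coeff i * x^i :=
    fun x => Polynomial.eval_eq_sum_range x
  have := Dvar_finsum Φ μ hμ.finite (Finset.range (q.natDegree + 1))
    (fun i => q.coeff i) (fun i => fun x => x^i) (fun x => q.eval x) hq
    (fun i _ j k => hKpow i j k) (fun i _ j => hJpow i j)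
  rw [this]
  apply Finset.sum_eq_zero
  intro i _
  rw [hAz i, mul_zero]
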